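/- arXiv:1512.08464 — 3 statements merged into one kernel-verified Lean document; each statement's English description precedes it below -/
import Mathlib

section
/- Robustness of a contracting linear system under bounded disturbance: let f(x,t) = A x where all eigenvalues issues are avoided by assuming ⟨Ax, x⟩ ≤ −β‖x‖² for all x (β > 0). If x solves x' = A x + d(t) with ‖d(t)‖ ≤ D for all t ≥ 0, and x₀ solves x₀' = A x₀, then ‖x(t) − x₀(t)‖ ≤ ‖x(0) − x₀(0)‖ e^{−β t} + D/β for all t ≥ 0. -/
open scoped RealInnerProductSpace
open Set Filter Topology

theorem robustness_bounded_disturbance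
    {E : Type*} [NormedAddCommGroup E] [InnerProductSpace ℝ E] [FiniteDimensional ℝ E]
    (A : E →ₗ[ℝ] E) (β : ℝ) (hβ : 0 < β)
    (hA : ∀ v : E, ⟪A v, v⟫ ≤ -β * ‖v‖ ^ 2)
    (d : ℝ → E) (hd : Continuous d) (D : ℝ) (hD : ∀ t, 0 ≤ t → ‖d t‖ ≤ D)
    (x x₀ : ℝ → E)
    (hx : ∀ t, HasDerivAt x (A (x t) + d t) t)
    (hx₀ : ∀ t, HasDerivAt x₀ (A (x₀ t)) t) :
    ∀ t, 0 ≤ t →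
      ‖x t - x₀ t‖ ≤ ‖x 0 - x₀ 0‖ * Real.exp (-β * t) + D / β := by
  intro t ht
  have hD0 : 0 ≤ D := le_trans (norm_nonneg _) (hD 0 le_rfl)
  set e : ℝ → E := fun s => x s - x₀ s with he_def
  have he : ∀ s, HasDerivAt e (A (e s) + d s) s := by
    intro s
    have h := (hx s).sub (hx₀ s)
    have : A (x s) + d s - A (x₀ s) = A (e s) + d s := by
      simp only [he_def, map_sub]; abel
    rwa [this] at h
  have hecont : Continuous e :=
    continuous_iff_continuousAt.2 fun s => (he s).continuousAt
  have key : ∀ ε > 0, ‖e t‖ ≤ ‖e 0‖ * Real.exp (-β * t) + (D / β + ε) := by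
    intro ε hε
    have main := image_le_of_liminf_slope_right_lt_deriv_boundary'
      (f := fun s => ‖e s‖) (f' := fun s => -β * ‖e s‖ + D) (a := 0) (b := t)
      (B := fun s => ‖e 0‖ * Real.exp (-β * s) + (D / β + ε))
      (B' := fun s => -β * (‖e 0‖ * Real.exp (-β * s)))
      ((continuous_norm.comp hecont).continuousOn)
      ?_ ?_ (by fun_prop) ?_ ?_
    · exact main (right_mem_Icc.2 ht)
    · -- slope condition
      intro s hs r hr
      by_cases h0 : e s = 0
      · have hfs : -β * ‖e s‖ + D = D := by rw [h0]; simp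
        have hr' : ‖d s‖ < r := lt_of_le_of_lt (hD s hs.1) (by rw [hfs] at hr; exact hr)
        have tends : Tendsto (slope e s) (𝓝[>] s) (𝓝 (A (e s) + d s)) :=
          (hasDerivAt_iff_tendsto_slope.mp (he s)).mono_left
            (nhdsWithin_mono s fun z hz => ne_of_gt hz)
        have tn : Tendsto (fun z => ‖slope e s z‖) (𝓝[>] s) (𝓝 ‖d s‖) := by
          simpa [h0] using tends.norm
        have hev : ∀ᶠ z in 𝓝[>] s, ‖slope e s z‖ < r := tn (Iio_mem_nhds hr')
        refine ((hev.and self_mem_nhdsWithin).mono ?_).frequently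
        rintro z ⟨hz, hzs⟩
        have hzs' : (0:ℝ) < z - s := sub_pos.2 hzs
        have : slope (fun u => ‖e u‖) s z = ‖slope e s z‖ := by
          simp only [slope, h0, norm_smul, smul_eq_mul, sub_zero, vsub_eq_sub, norm_inv,
            Real.norm_eq_abs, abs_inv, abs_of_pos hzs', norm_zero, sub_zero]
        rwa [this]
      · -- e s ≠ 0 : the norm is differentiable
        set w : E := A (e s) + d s with hw
        have hinner : HasDerivAt (fun u => ⟪e u, e u⟫) (⟪e s, w⟫ + ⟪w, e s⟫) s :=
          HasDerivAt.inner ℝ (he s) (he s)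
        have hne : ⟪e s, e s⟫ ≠ (0:ℝ) := inner_self_ne_zero.2 h0
        have hg := hinner.sqrt hne
        have hgeq : (fun u => Real.sqrt ⟪e u, e u⟫) = fun u => ‖e u‖ :=
          funext fun u => (norm_eq_sqrt_real_inner (e u)).symm
        have hsq : Real.sqrt ⟪e s, e s⟫ = ‖e s‖ := (norm_eq_sqrt_real_inner (e s)).symm
        rw [hgeq, hsq] at hg
        set m : ℝ := (⟪e s, w⟫ + ⟪w, e s⟫) / (2 * ‖e s‖) with hm_def
        have hnorm_pos : (0:ℝ) < ‖e s‖ := norm_pos_iff.2 h0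
        have hiw : ⟪w, e s⟫ ≤ -β * ‖e s‖ ^ 2 + D * ‖e s‖ := by
          have h1 : ⟪A (e s), e s⟫ ≤ -β * ‖e s‖ ^ 2 := hA (e s)
          have h2 : ⟪d s, e s⟫ ≤ D * ‖e s‖ :=
            le_trans (real_inner_le_norm _ _)
              (mul_le_mul_of_nonneg_right (hD s hs.1) (norm_nonneg _))
          calc ⟪w, e s⟫ = ⟪A (e s), e s⟫ + ⟪d s, e s⟫ := by rw [hw, inner_add_left]
            _ ≤ -β * ‖e s‖ ^ 2 + D * ‖e s‖ := add_le_add h1 h2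
        have hm_le : m ≤ -β * ‖e s‖ + D := by
          rw [hm_def, div_le_iff₀ (by positivity)]
          have hcomm : ⟪e s, w⟫ = ⟪w, e s⟫ := real_inner_comm _ _
          nlinarith [sq_nonneg (‖e s‖)]
        have tends : Tendsto (slope (fun u => ‖e u‖) s) (𝓝[>] s) (𝓝 m) :=
          (hasDerivAt_iff_tendsto_slope.mp hg).mono_left
            (nhdsWithin_mono s fun z hz => ne_of_gt hz)
        have hev : ∀ᶠ z in 𝓝[>] s, slope (fun u => ‖e u‖) s z < r :=
          tends (Iio_mem_nhds (lt_of_le_of_lt hm_le hr))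
        exact hev.frequently
    · -- f 0 ≤ B 0
      have : Real.exp (-β * 0) = 1 := by simp
      simp only [this, mul_one]
      have : 0 ≤ D / β := div_nonneg hD0 hβ.le
      linarith
    · -- B derivative
      intro s _
      have h1 : HasDerivAt (fun u : ℝ => -β * u) (-β) s := by
        simpa using (hasDerivAt_id s).const_mul (-β)
      have h2 := ((h1.exp.const_mul (‖e 0‖)).add_const (D / β + ε)).hasDerivWithinAt
        (s := Ici s)
      convert h2 using 1
      · rfl
      · rfl
      ring
    · -- strict inequality when f = B
      intro s _ hfs
      rw [hfs]
      have hb : -β * (‖e 0‖ * Real.exp (-β * s) + (D / β + ε)) + D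
          = -β * (‖e 0‖ * Real.exp (-β * s)) - β * ε := by
        field_simp; ring
      rw [hb]
      have : 0 < β * ε := mul_pos hβ hε
      linarith
  have : ‖e t‖ ≤ ‖e 0‖ * Real.exp (-β * t) + D / β := by
    refine le_of_forall_pos_le_add fun ε hε => ?_
    have := key ε hε
    linarith
  exact this
end

section
/- Robustness with finite-gain L-stable disturbance in an inner product space: let ⟨A v, v⟩ ≤ −β ‖v‖² for all v with β > 0, let d : E × ℝ → E satisfy ‖d(x,t)‖ ≤ K₀ + K_x ‖x‖ with 0 ≤ K_x < β, let x₀ solve x₀' = A x₀ with ‖x₀(t)‖ ≤ M for all t ≥ 0, and let x solve x' = A x + d(x(t), t). Then ‖x(t) − x₀(t)‖ ≤ ‖x(0) − x₀(0)‖ e^{−(β − K_x)t} + (K₀ + K_x M)/(β − K_x) for all t ≥ 0. -/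
open scoped RealInnerProductSpace

set_option maxHeartbeats 1000000

theorem robustness_finite_gain_disturbance
    {E : Type*} [NormedAddCommGroup E] [InnerProductSpace ℝ E] [FiniteDimensional ℝ E]
    (A : E →ₗ[ℝ] E) (β Kx K₀ M : ℝ)
    (hβ : 0 < β) (hKx : 0 ≤ Kx) (hKxβ : Kx < β) (hK₀ : 0 ≤ K₀) (hM : 0 ≤ M)
    (hA : ∀ v : E, ⟪A v, v⟫ ≤ -β * ‖v‖ ^ 2)
    (d : E → ℝ → E) (hd : ∀ v t, ‖d v t‖ ≤ K₀ + Kx * ‖v‖)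
    (x x₀ : ℝ → E)
    (hx : ∀ t, HasDerivAt x (A (x t) + d (x t) t) t)
    (hx₀ : ∀ t, HasDerivAt x₀ (A (x₀ t)) t)
    (hx₀bdd : ∀ t, 0 ≤ t → ‖x₀ t‖ ≤ M) :
    ∀ t, 0 ≤ t →
      ‖x t - x₀ t‖ ≤ ‖x 0 - x₀ 0‖ * Real.exp (-(β - Kx) * t)
        + (K₀ + Kx * M) / (β - Kx) := by
  intro t ht
  set a : ℝ := β - Kx with ha_def
  have ha : 0 < a := sub_pos.2 hKxβ
  set c : ℝ := K₀ + Kx * M with hc_def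
  have hc0 : 0 ≤ c := add_nonneg hK₀ (mul_nonneg hKx hM)
  set e : ℝ → E := fun s => x s - x₀ s with he_def
  set y0 : ℝ := ‖x 0 - x₀ 0‖ with hy0_def
  have hy00 : 0 ≤ y0 := norm_nonneg _
  -- derivative of e
  have he : ∀ s, HasDerivAt e (A (e s) + d (x s) s) s := by
    intro s
    have h := (hx s).sub (hx₀ s)
    have : A (x s) + d (x s) s - A (x₀ s) = A (e s) + d (x s) s := by
      simp only [he_def, map_sub]; abel
    rw [← this]
    exact h
  -- derivative of ‖e‖²
  have hf : ∀ s, HasDerivAt (fun s => ‖e s‖ ^ 2)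
      (2 * ⟪A (e s) + d (x s) s, e s⟫) s := by
    intro s
    have h := (he s).inner ℝ (he s)
    have heq : (fun s => ⟪e s, e s⟫) = fun s => ‖e s‖ ^ 2 := by
      funext s; rw [real_inner_self_eq_norm_sq]
    rw [heq] at h
    have e2 : 2 * ⟪A (e s) + d (x s) s, e s⟫
        = ⟪e s, A (e s) + d (x s) s⟫ + ⟪A (e s) + d (x s) s, e s⟫ := by
      rw [real_inner_comm (e s)]
      ring
    rw [e2]; exact h
  -- key pointwise estimate
  have key : ∀ s, 0 ≤ s →
      2 * ⟪A (e s) + d (x s) s, e s⟫ ≤ 2 * ‖e s‖ * (-a * ‖e s‖ + c) := by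
    intro s hs
    have h1 : ⟪A (e s), e s⟫ ≤ -β * ‖e s‖ ^ 2 := hA (e s)
    have h2 : ⟪d (x s) s, e s⟫ ≤ (K₀ + Kx * ‖x s‖) * ‖e s‖ := by
      calc ⟪d (x s) s, e s⟫ ≤ ‖d (x s) s‖ * ‖e s‖ := real_inner_le_norm _ _
        _ ≤ (K₀ + Kx * ‖x s‖) * ‖e s‖ :=
          mul_le_mul_of_nonneg_right (hd _ _) (norm_nonneg _)
    have h3 : ‖x s‖ ≤ ‖e s‖ + M := by
      calc ‖x s‖ = ‖e s + x₀ s‖ := by simp [he_def]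
        _ ≤ ‖e s‖ + ‖x₀ s‖ := norm_add_le _ _
        _ ≤ ‖e s‖ + M := by linarith [hx₀bdd s hs]
    have h4 : ⟪d (x s) s, e s⟫ ≤ (c + Kx * ‖e s‖) * ‖e s‖ := by
      refine h2.trans (mul_le_mul_of_nonneg_right ?_ (norm_nonneg _))
      have := mul_le_mul_of_nonneg_left h3 hKx
      simp only [hc_def]; nlinarith
    rw [inner_add_left]
    nlinarith [norm_nonneg (e s), sq_nonneg (‖e s‖)]
  -- the ε-perturbed comparison
  have main : ∀ ε : ℝ, 0 < ε →
      ‖e t‖ ≤ (y0 + ε) * Real.exp (-a * t) + c / a + ε := by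
    intro ε hε
    set b : ℝ → ℝ := fun s => (y0 + ε) * Real.exp (-a * s) + c / a + ε with hb_def
    have hbpos : ∀ s, 0 ≤ s → 0 < b s := by
      intro s hs
      have h1 : 0 < (y0 + ε) * Real.exp (-a * s) :=
        mul_pos (by linarith) (Real.exp_pos _)
      have h2 : 0 ≤ c / a := div_nonneg hc0 ha.le
      simp only [hb_def]; linarith
    have hb' : ∀ s, HasDerivAt b (-(a * ((y0 + ε) * Real.exp (-a * s)))) s := by
      intro s
      have h1 : HasDerivAt (fun y : ℝ => -a * y) (-a) s := by
        simpa only [mul_one, id_eq] using (hasDerivAt_id s).const_mul (-a)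
      have h : HasDerivAt (fun s : ℝ => Real.exp (-a * s)) (Real.exp (-a * s) * (-a)) s :=
        (Real.hasDerivAt_exp (-a * s)).comp s h1
      have := ((h.const_mul (y0 + ε)).add_const (c / a)).add_const ε
      exact this.congr_deriv (by ring)
    have hB : ∀ s, HasDerivAt (fun s => (b s) ^ 2)
        (2 * b s * (-(a * ((y0 + ε) * Real.exp (-a * s))))) s := by
      intro s
      have := (hb' s).pow 2
      exact this.congr_deriv (by ring)
    have hcomp := image_le_of_deriv_right_lt_deriv_boundary
        (f := fun s => ‖e s‖ ^ 2) (B := fun s => (b s) ^ 2) (a := 0) (b := t)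
        (f' := fun s => 2 * ⟪A (e s) + d (x s) s, e s⟫)
        (B' := fun s => 2 * b s * (-(a * ((y0 + ε) * Real.exp (-a * s)))))
        (fun s _ => ((hf s).continuousAt).continuousWithinAt)
        (fun s _ => (hf s).hasDerivWithinAt)
        ?_ hB ?_
    · have hfin := hcomp ⟨ht, le_refl t⟩
      have hbt : 0 < b t := hbpos t ht
      have hle : ‖e t‖ ≤ b t := by nlinarith [norm_nonneg (e t)]
      simpa only [hb_def] using hle
    · have hb0 : b 0 = y0 + ε + c / a + ε := by simp [hb_def]
      simp only [hb0]
      have h2 : 0 ≤ c / a := div_nonneg hc0 ha.le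
      nlinarith
    · intro s hs hEq
      have hs0 : 0 ≤ s := hs.1
      have hEq' : ‖e s‖ ^ 2 = b s ^ 2 := hEq
      show 2 * ⟪A (e s) + d (x s) s, e s⟫ < 2 * b s * (-(a * ((y0 + ε) * Real.exp (-a * s))))
      have hbeq : ‖e s‖ = b s := by
        have h1 := hbpos s hs0
        nlinarith [norm_nonneg (e s)]
      have hk := key s hs0
      rw [hbeq] at hk
      refine hk.trans_lt ?_
      have h1 : -(a * ((y0 + ε) * Real.exp (-a * s))) = -a * b s + c + a * ε := by
        simp only [hb_def]; field_simp; ring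
      rw [h1]
      have h2 := hbpos s hs0
      nlinarith [mul_pos (mul_pos ha hε) h2]
  -- take ε → 0
  have goal : ‖e t‖ ≤ y0 * Real.exp (-a * t) + c / a := by
    refine le_of_forall_pos_le_add ?_
    intro ε hε
    have h2 : ε / 3 > 0 := by linarith
    have h := main (ε / 3) h2
    have hexp : Real.exp (-a * t) ≤ 1 := by
      rw [Real.exp_le_one_iff]
      nlinarith
    nlinarith [Real.exp_pos (-a * t)]
  simpa [he_def, ha_def, hc_def, hy0_def] using goal
end

section
/- Passivity implies Lyapunov decrease for the four-room system: if f, g1, g2 are passive (x·f(x) > 0 for x ≠ 0) and ε ≥ 0, then V = (x11² + x12² + x21² + x22²)/2 is nonincreasing along solutions of the four-room system, and strictly decreasing unless x12 = x11, x22 = x21, and (if ε > 0) x21 = x11, x22 = x12. -/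
theorem passivity_lyapunov_decrease
    (f g1 g2 : ℝ → ℝ) (hf : Continuous f) (hg1 : Continuous g1) (hg2 : Continuous g2)
    (hfpass : ∀ s : ℝ, s ≠ 0 → 0 < s * f s)
    (hg1pass : ∀ s : ℝ, s ≠ 0 → 0 < s * g1 s)
    (hg2pass : ∀ s : ℝ, s ≠ 0 → 0 < s * g2 s)
    (hf0 : ∀ s : ℝ, 0 ≤ s * f s) (hg10 : ∀ s : ℝ, 0 ≤ s * g1 s)
    (hg20 : ∀ s : ℝ, 0 ≤ s * g2 s)
    (ε : ℝ) (hε : 0 ≤ ε) (x11 x12 x21 x22 : ℝ → ℝ)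
    (h11 : ∀ t, HasDerivAt x11 (f (x12 t - x11 t) + ε * g1 (x21 t - x11 t)) t)
    (h12 : ∀ t, HasDerivAt x12 (-f (x12 t - x11 t) + ε * g2 (x22 t - x12 t)) t)
    (h21 : ∀ t, HasDerivAt x21 (f (x22 t - x21 t) - ε * g1 (x21 t - x11 t)) t)
    (h22 : ∀ t, HasDerivAt x22 (-f (x22 t - x21 t) - ε * g2 (x22 t - x12 t)) t) :
    ∀ t, HasDerivAt (fun s => (x11 s ^ 2 + x12 s ^ 2 + x21 s ^ 2 + x22 s ^ 2) / 2)
        (-(x12 t - x11 t) * f (x12 t - x11 t) - (x22 t - x21 t) * f (x22 t - x21 t)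
          - ε * (x21 t - x11 t) * g1 (x21 t - x11 t)
          - ε * (x22 t - x12 t) * g2 (x22 t - x12 t)) t ∧
      (-(x12 t - x11 t) * f (x12 t - x11 t) - (x22 t - x21 t) * f (x22 t - x21 t)
          - ε * (x21 t - x11 t) * g1 (x21 t - x11 t)
          - ε * (x22 t - x12 t) * g2 (x22 t - x12 t)) ≤ 0 ∧
      ((x12 t ≠ x11 t ∨ x22 t ≠ x21 t ∨
          (0 < ε ∧ (x21 t ≠ x11 t ∨ x22 t ≠ x12 t))) →
        (-(x12 t - x11 t) * f (x12 t - x11 t) - (x22 t - x21 t) * f (x22 t - x21 t)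
          - ε * (x21 t - x11 t) * g1 (x21 t - x11 t)
          - ε * (x22 t - x12 t) * g2 (x22 t - x12 t)) < 0) := by
  intro t
  have hD : HasDerivAt (fun s => (x11 s ^ 2 + x12 s ^ 2 + x21 s ^ 2 + x22 s ^ 2) / 2)
      (-(x12 t - x11 t) * f (x12 t - x11 t) - (x22 t - x21 t) * f (x22 t - x21 t)
        - ε * (x21 t - x11 t) * g1 (x21 t - x11 t)
        - ε * (x22 t - x12 t) * g2 (x22 t - x12 t)) t := by
    have h := ((((h11 t).pow 2).add ((h12 t).pow 2)).add ((h21 t).pow 2)).add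
      ((h22 t).pow 2) |>.div_const 2
    refine HasDerivAt.congr_deriv h ?_
    push_cast
    ring
  refine ⟨hD, ?_, ?_⟩
  · have t1 := hf0 (x12 t - x11 t)
    have t2 := hf0 (x22 t - x21 t)
    have t3 := hg10 (x21 t - x11 t)
    have t4 := hg20 (x22 t - x12 t)
    nlinarith [mul_nonneg hε t3, mul_nonneg hε t4]
  · intro h
    have t1 := hf0 (x12 t - x11 t)
    have t2 := hf0 (x22 t - x21 t)
    have t3 := hg10 (x21 t - x11 t)
    have t4 := hg20 (x22 t - x12 t)
    rcases h with h | h | ⟨hε', h | h⟩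
    · have := hfpass (x12 t - x11 t) (sub_ne_zero.mpr h)
      nlinarith [mul_nonneg hε t3, mul_nonneg hε t4]
    · have := hfpass (x22 t - x21 t) (sub_ne_zero.mpr h)
      nlinarith [mul_nonneg hε t3, mul_nonneg hε t4]
    · have := mul_pos hε' (hg1pass (x21 t - x11 t) (sub_ne_zero.mpr h))
      nlinarith [mul_nonneg hε t4]
    · have := mul_pos hε' (hg2pass (x22 t - x12 t) (sub_ne_zero.mpr h))
      nlinarith [mul_nonneg hε t3]
end
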